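/- arXiv:1307.0625 — 5 statements merged into one kernel-verified Lean document; each statement's English description precedes it below -/
import Mathlib

section
/- Let N = 2^e with e ≥ 1, let m be an integer with 5m ≡ 1 (mod N), and set S = L²⁰·R^m·L⁻⁴·R⁻¹ in SL(2,ℤ). Then the element (L·R⁻¹·L)⁻¹·S·(L·R⁻¹·L)·S lies in Γ(N). -/
open Matrix CongruenceSubgroup

local notation "SL2Z" => Matrix.SpecialLinearGroup (Fin 2) ℤ

/-- The matrix `L = [[1,0],[1,1]]` as an element of `SL(2, ℤ)`. -/
def L : SL2Z := ⟨!![1, 0; 1, 1], by norm_num [Matrix.det_fin_two_of]⟩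

/-- The matrix `R = [[1,1],[0,1]]` as an element of `SL(2, ℤ)`. -/
def R : SL2Z := ⟨!![1, 1; 0, 1], by norm_num [Matrix.det_fin_two_of]⟩

lemma L_inv_eq : (L⁻¹ : SL2Z) = ⟨!![1, 0; -1, 1], by norm_num [Matrix.det_fin_two_of]⟩ := by
  apply inv_eq_of_mul_eq_one_right
  ext i j
  change ((L : Matrix (Fin 2) (Fin 2) ℤ) * (!![1, 0; -1, 1] : Matrix (Fin 2) (Fin 2) ℤ) : Matrix (Fin 2) (Fin 2) ℤ) i j = (1 : Matrix (Fin 2) (Fin 2) ℤ) i j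
  fin_cases i <;> fin_cases j <;>
    simp [L, Matrix.SpecialLinearGroup.coe_mul, Matrix.mul_apply, Fin.sum_univ_succ, Matrix.one_fin_two]

lemma coe_L_zpow (n : ℤ) : ((L ^ n : SL2Z) : Matrix (Fin 2) (Fin 2) ℤ) = !![1, 0; n, 1] := by
  induction n using Int.induction_on with
  | zero => simp [Matrix.one_fin_two]
  | succ k ih =>
      rw [_root_.zpow_add, zpow_one, Matrix.SpecialLinearGroup.coe_mul, ih]
      ext i j
      fin_cases i <;> fin_cases j <;>
        simp [L, Matrix.mul_apply, Fin.sum_univ_succ] <;> push_cast <;> ring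
  | pred k ih =>
      have h1 : ((L ^ (-1 : ℤ) : SL2Z) : Matrix (Fin 2) (Fin 2) ℤ) = !![1, 0; -1, 1] := by
        rw [_root_.zpow_neg, zpow_one, L_inv_eq]
      rw [sub_eq_add_neg, _root_.zpow_add, Matrix.SpecialLinearGroup.coe_mul, ih, h1]
      ext i j
      fin_cases i <;> fin_cases j <;>
        simp [Matrix.mul_apply, Fin.sum_univ_succ] <;> push_cast <;> ring

lemma coe_R_zpow (n : ℤ) : ((R ^ n : SL2Z) : Matrix (Fin 2) (Fin 2) ℤ) = !![1, n; 0, 1] := by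
  have hR : R = ModularGroup.T := by
    ext i j; fin_cases i <;> fin_cases j <;> simp [R, ModularGroup.T]
  rw [hR, ModularGroup.coe_T_zpow]

theorem stmt_1 (e : ℕ) (he : 1 ≤ e) (m : ℤ)
    (hm : 5 * m ≡ 1 [ZMOD ((2 : ℤ) ^ e)])
    (S : SL2Z) (hS : S = L ^ 20 * R ^ m * L ^ (-4 : ℤ) * R⁻¹) :
    (L * R⁻¹ * L)⁻¹ * S * (L * R⁻¹ * L) * S ∈ Gamma (2 ^ e) := by
  have hScoe : (S : Matrix (Fin 2) (Fin 2) ℤ) =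
      !![1 - 4 * m, 5 * m - 1; 16 - 80 * m, 100 * m - 15] := by
    have h20 : (L ^ 20 : SL2Z) = L ^ (20 : ℤ) := (zpow_natCast L 20).symm
    have hR1 : (R⁻¹ : SL2Z) = R ^ (-1 : ℤ) := by simp
    rw [hS, h20, hR1]
    simp only [Matrix.SpecialLinearGroup.coe_mul, coe_L_zpow, coe_R_zpow]
    ext i j
    fin_cases i <;> fin_cases j <;> simp [Matrix.mul_apply, Fin.sum_univ_succ] <;> ring
  have hA : ((L * R⁻¹ * L : SL2Z) : Matrix (Fin 2) (Fin 2) ℤ) = !![0, -1; 1, 0] := by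
    have hR1 : (R⁻¹ : SL2Z) = R ^ (-1 : ℤ) := by simp
    have h1 : (L : SL2Z) = L ^ (1 : ℤ) := (zpow_one L).symm
    rw [hR1, h1]
    simp only [Matrix.SpecialLinearGroup.coe_mul, coe_L_zpow, coe_R_zpow]
    ext i j
    fin_cases i <;> fin_cases j <;> simp [Matrix.mul_apply, Fin.sum_univ_succ]
  have hAinv : (((L * R⁻¹ * L)⁻¹ : SL2Z) : Matrix (Fin 2) (Fin 2) ℤ) = !![0, 1; -1, 0] := by
    have h1 : ((L * R⁻¹ * L : SL2Z) * (L * R⁻¹ * L)⁻¹ : SL2Z) = 1 := mul_inv_cancel _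
    have h2 := congrArg (fun g : SL2Z => (g : Matrix (Fin 2) (Fin 2) ℤ)) h1
    simp only [Matrix.SpecialLinearGroup.coe_mul, hA, Matrix.SpecialLinearGroup.coe_one] at h2
    have h3 : (!![0, 1; -1, 0] : Matrix (Fin 2) (Fin 2) ℤ) * !![0, -1; 1, 0] = 1 := by
      ext i j
      fin_cases i <;> fin_cases j <;>
        simp [Matrix.mul_apply, Fin.sum_univ_succ, Matrix.one_fin_two]
    calc (((L * R⁻¹ * L)⁻¹ : SL2Z) : Matrix (Fin 2) (Fin 2) ℤ)
        = 1 * (((L * R⁻¹ * L)⁻¹ : SL2Z) : Matrix (Fin 2) (Fin 2) ℤ) := (one_mul _).symm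
      _ = !![0, 1; -1, 0] * (!![0, -1; 1, 0] *
            (((L * R⁻¹ * L)⁻¹ : SL2Z) : Matrix (Fin 2) (Fin 2) ℤ)) := by
            rw [← Matrix.mul_assoc, h3]
      _ = !![0, 1; -1, 0] * 1 := by rw [h2]
      _ = !![0, 1; -1, 0] := Matrix.mul_one _
  have hT : (((L * R⁻¹ * L)⁻¹ * S * (L * R⁻¹ * L) * S : SL2Z) : Matrix (Fin 2) (Fin 2) ℤ) =
      !![1 + 17 * (16 - 80 * m) * (5 * m - 1), 17 * (100 * m - 15) * (5 * m - 1);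
         -(17 * (1 - 4 * m) * (5 * m - 1)), 1 - 17 * (5 * m - 1) * (5 * m - 1)] := by
    simp only [Matrix.SpecialLinearGroup.coe_mul, hAinv, hA, hScoe]
    ext i j
    fin_cases i <;> fin_cases j <;> simp [Matrix.mul_apply, Fin.sum_univ_succ] <;> ring
  have h5 : (5 * (m : ZMod (2 ^ e)) - 1) = 0 := by
    have hm' : 5 * m ≡ 1 [ZMOD ((2 ^ e : ℕ) : ℤ)] := by
      rw [show (((2 ^ e : ℕ) : ℤ)) = (2 : ℤ) ^ e by push_cast; ring]; exact hm
    have : ((5 * m : ℤ) : ZMod (2 ^ e)) = ((1 : ℤ) : ZMod (2 ^ e)) :=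
      (ZMod.intCast_eq_intCast_iff _ _ _).mpr hm'
    push_cast at this
    rw [this]; ring
  rw [Gamma_mem]
  have e00 := congrFun (congrFun hT 0) 0
  have e01 := congrFun (congrFun hT 0) 1
  have e10 := congrFun (congrFun hT 1) 0
  have e11 := congrFun (congrFun hT 1) 1
  simp only [Matrix.cons_val', Matrix.cons_val_zero, Matrix.cons_val_one, Matrix.head_cons,
    Matrix.empty_val', Matrix.cons_val_fin_one, Matrix.head_fin_const, Matrix.of_apply] at e00 e01 e10 e11
  refine ⟨?_, ?_, ?_, ?_⟩
  · show (((((L * R⁻¹ * L)⁻¹ * S * (L * R⁻¹ * L) * S : SL2Z) :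
        Matrix (Fin 2) (Fin 2) ℤ) 0 0 : ℤ) : ZMod (2 ^ e)) = 1
    rw [e00]; push_cast
    linear_combination (17 * (16 - 80 * (m : ZMod (2 ^ e)))) * h5
  · show (((((L * R⁻¹ * L)⁻¹ * S * (L * R⁻¹ * L) * S : SL2Z) :
        Matrix (Fin 2) (Fin 2) ℤ) 0 1 : ℤ) : ZMod (2 ^ e)) = 0
    rw [e01]; push_cast
    linear_combination (17 * (100 * (m : ZMod (2 ^ e)) - 15)) * h5
  · show (((((L * R⁻¹ * L)⁻¹ * S * (L * R⁻¹ * L) * S : SL2Z) :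
        Matrix (Fin 2) (Fin 2) ℤ) 1 0 : ℤ) : ZMod (2 ^ e)) = 0
    rw [e10]; push_cast
    linear_combination (-(17 * (1 - 4 * (m : ZMod (2 ^ e))))) * h5
  · show (((((L * R⁻¹ * L)⁻¹ * S * (L * R⁻¹ * L) * S : SL2Z) :
        Matrix (Fin 2) (Fin 2) ℤ) 1 1 : ℤ) : ZMod (2 ^ e)) = 1
    rw [e11]; push_cast
    linear_combination (-(17 * (5 * (m : ZMod (2 ^ e)) - 1))) * h5
end

section
/- Let N = 2^e with e ≥ 1, let m be an integer with 5m ≡ 1 (mod N), and set S = L²⁰·R^m·L⁻⁴·R⁻¹ in SL(2,ℤ). Then the element S⁻¹·R·S·R⁻²⁵ lies in Γ(N). -/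
open Matrix CongruenceSubgroup

local notation "SL2Z" => Matrix.SpecialLinearGroup (Fin 2) ℤ

theorem stmt_2 (e : ℕ) (he : 1 ≤ e) (m : ℤ)
    (hm : 5 * m ≡ 1 [ZMOD ((2 : ℤ) ^ e)])
    (S : SL2Z) (hS : S = L ^ 20 * R ^ m * L ^ (-4 : ℤ) * R⁻¹) :
    S⁻¹ * R * S * R ^ (-25 : ℤ) ∈ Gamma (2 ^ e) := by
  have h20 : (L ^ 20 : SL2Z) = L ^ (20 : ℤ) := by
    rw [← zpow_natCast L 20]; norm_num
  have hRinv : (R⁻¹ : SL2Z) = R ^ (-1 : ℤ) := by rw [_root_.zpow_neg, zpow_one]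
  have hScoe : (S : Matrix (Fin 2) (Fin 2) ℤ) = !![1 - 4*m, 5*m - 1; 16 - 80*m, 100*m - 15] := by
    rw [hS, h20, hRinv]
    simp only [Matrix.SpecialLinearGroup.coe_mul, coe_R_zpow, coe_L_zpow]
    ext i j
    fin_cases i <;> fin_cases j <;>
      (simp [Matrix.mul_apply, Fin.sum_univ_two]; try ring)
  have hSinv : ((S⁻¹ : SL2Z) : Matrix (Fin 2) (Fin 2) ℤ)
      = !![100*m - 15, 1 - 5*m; 80*m - 16, 1 - 4*m] := by
    rw [Matrix.SpecialLinearGroup.SL2_inv_expl]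
    ext i j
    fin_cases i <;> fin_cases j <;> (simp [hScoe]; try ring)
  have hfull : ((S⁻¹ * R * S * R ^ (-25 : ℤ) : SL2Z) : Matrix (Fin 2) (Fin 2) ℤ)
      = !![-8000*m^2 + 2800*m - 239, 210000*m^2 - 73000*m + 6200;
           -6400*m^2 + 2560*m - 256, 168000*m^2 - 66800*m + 6641] := by
    have hR : ((R : SL2Z) : Matrix (Fin 2) (Fin 2) ℤ) = !![1, 1; 0, 1] := rfl
    simp only [Matrix.SpecialLinearGroup.coe_mul, hSinv, hScoe, coe_R_zpow, hR]
    ext i j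
    fin_cases i <;> fin_cases j <;>
      (simp [Matrix.mul_apply, Fin.sum_univ_two]; try ring)
  have h5 : ((5 * m : ℤ) : ZMod (2 ^ e)) = ((1 : ℤ) : ZMod (2 ^ e)) := by
    rw [ZMod.intCast_eq_intCast_iff]
    simpa using hm
  push_cast at h5
  rw [Gamma_mem]
  have key : ∀ i j, ((S⁻¹ * R * S * R ^ (-25 : ℤ) : SL2Z) i j : ZMod (2 ^ e))
      = ((!![-8000*m^2 + 2800*m - 239, 210000*m^2 - 73000*m + 6200;
           -6400*m^2 + 2560*m - 256, 168000*m^2 - 66800*m + 6641] : Matrix (Fin 2) (Fin 2) ℤ) i j : ZMod (2 ^ e)) := by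
    intro i j
    rw [show ((S⁻¹ * R * S * R ^ (-25 : ℤ) : SL2Z) : Matrix (Fin 2) (Fin 2) ℤ) i j
      = _ from congrFun (congrFun hfull i) j]
  refine ⟨?_, ?_, ?_, ?_⟩
  · rw [key 0 0]
    simp only [Matrix.of_apply, Matrix.cons_val', Matrix.cons_val_zero, Matrix.cons_val_one,
      Matrix.head_cons, Matrix.empty_val', Matrix.cons_val_fin_one, Matrix.head_fin_const]
    push_cast
    linear_combination (-1600 * (m : ZMod (2^e)) + 240) * h5
  · rw [key 0 1]
    simp only [Matrix.of_apply, Matrix.cons_val', Matrix.cons_val_zero, Matrix.cons_val_one,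
      Matrix.head_cons, Matrix.empty_val', Matrix.cons_val_fin_one, Matrix.head_fin_const]
    push_cast
    linear_combination (42000 * (m : ZMod (2^e)) - 6200) * h5
  · rw [key 1 0]
    simp only [Matrix.of_apply, Matrix.cons_val', Matrix.cons_val_zero, Matrix.cons_val_one,
      Matrix.head_cons, Matrix.empty_val', Matrix.cons_val_fin_one, Matrix.head_fin_const]
    push_cast
    linear_combination (-1280 * (m : ZMod (2^e)) + 256) * h5
  · rw [key 1 1]
    simp only [Matrix.of_apply, Matrix.cons_val', Matrix.cons_val_zero, Matrix.cons_val_one,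
      Matrix.head_cons, Matrix.empty_val', Matrix.cons_val_fin_one, Matrix.head_fin_const]
    push_cast
    linear_combination (33600 * (m : ZMod (2^e)) - 6640) * h5
end

section
/- Let N = e·m where e = 2^f with f ≥ 1 and m is an odd integer with m > 1. Let c, d be integers with c ≡ 0 (mod e), c ≡ 1 (mod m), d ≡ 1 (mod e), d ≡ 0 (mod m), and set a = L^c and r = R^d in SL(2,ℤ). Then the commutator a⁻¹·r⁻¹·a·r lies in Γ(N). -/
open Matrix CongruenceSubgroup

local notation "SL2Z" => Matrix.SpecialLinearGroup (Fin 2) ℤ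

theorem stmt_4 (f : ℕ) (hf : 1 ≤ f) (m : ℕ) (hmodd : Odd m) (hm1 : 1 < m)
    (c d : ℤ) (hc0 : c ≡ 0 [ZMOD ((2 : ℤ) ^ f)]) (hc1 : c ≡ 1 [ZMOD (m : ℤ)])
    (hd1 : d ≡ 1 [ZMOD ((2 : ℤ) ^ f)]) (hd0 : d ≡ 0 [ZMOD (m : ℤ)])
    (a r : SL2Z) (ha : a = L ^ c) (hr : r = R ^ d) :
    a⁻¹ * r⁻¹ * a * r ∈ Gamma (2 ^ f * m) := by
  have hec : ((2 : ℤ) ^ f) ∣ c := by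
    have := hc0.dvd; simpa using this
  have hmd : ((m : ℤ)) ∣ d := by
    have := hd0.dvd; simpa using this
  have hNcd : ((2 ^ f * m : ℕ) : ℤ) ∣ c * d := by
    push_cast
    exact mul_dvd_mul hec hmd
  have hcd : ((c * d : ℤ) : ZMod (2 ^ f * m)) = 0 :=
    (ZMod.intCast_zmod_eq_zero_iff_dvd _ _).2 hNcd
  have hai : a⁻¹ = L ^ (-c) := by rw [ha, _root_.zpow_neg]
  have hri : r⁻¹ = R ^ (-d) := by rw [hr, _root_.zpow_neg]
  have hcoe : ((a⁻¹ * r⁻¹ * a * r : SL2Z) : Matrix (Fin 2) (Fin 2) ℤ) =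
      !![1 - c * d, -(c * d * d); c * c * d, c * c * d * d + c * d + 1] := by
    rw [Matrix.SpecialLinearGroup.coe_mul, Matrix.SpecialLinearGroup.coe_mul,
      Matrix.SpecialLinearGroup.coe_mul, hai, hri, ha, hr, coe_L_zpow, coe_R_zpow,
      coe_L_zpow, coe_R_zpow, Matrix.mul_fin_two, Matrix.mul_fin_two, Matrix.mul_fin_two]
    norm_num
    ring_nf
    simp
  rw [Gamma_mem]
  have e00 : ((a⁻¹ * r⁻¹ * a * r : SL2Z) : Matrix (Fin 2) (Fin 2) ℤ) 0 0 = 1 - c * d := by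
    rw [hcoe]; simp
  have e01 : ((a⁻¹ * r⁻¹ * a * r : SL2Z) : Matrix (Fin 2) (Fin 2) ℤ) 0 1 = -(c * d * d) := by
    rw [hcoe]; simp
  have e10 : ((a⁻¹ * r⁻¹ * a * r : SL2Z) : Matrix (Fin 2) (Fin 2) ℤ) 1 0 = c * c * d := by
    rw [hcoe]; simp
  have e11 : ((a⁻¹ * r⁻¹ * a * r : SL2Z) : Matrix (Fin 2) (Fin 2) ℤ) 1 1
      = c * c * d * d + c * d + 1 := by
    rw [hcoe]; simp
  refine ⟨?_, ?_, ?_, ?_⟩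
  ·     rw [e00]; push_cast; rw [show ((c : ZMod (2^f*m)) * d) = ((c*d : ℤ) : ZMod (2^f*m)) by push_cast; ring, hcd]; ring
  ·     rw [e01]; push_cast; rw [show ((c : ZMod (2^f*m)) * d * d) = ((c*d : ℤ) : ZMod (2^f*m)) * d by push_cast; ring, hcd]; ring
  ·     rw [e10]; push_cast; rw [show ((c : ZMod (2^f*m)) * c * d) = c * ((c*d : ℤ) : ZMod (2^f*m)) by push_cast; ring, hcd]; ring
  · rw [e11]; push_cast
    rw [show ((c : ZMod (2^f*m)) * c * d * d + c * d + 1)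
        = ((c*d : ℤ) : ZMod (2^f*m)) * (((c*d:ℤ) : ZMod (2^f*m)) + 1) + 1 by push_cast; ring, hcd]
    ring
end

section
/- Let N = e·m where e = 2^f with f ≥ 1 and m is an odd integer with m > 1. Let c be an integer with c ≡ 0 (mod e) and c ≡ 1 (mod m), and set a = L^c and b = R^c in SL(2,ℤ). Then the element (a·b⁻¹·a)⁴ lies in Γ(N). -/
open Matrix CongruenceSubgroup

local notation "SL2Z" => Matrix.SpecialLinearGroup (Fin 2) ℤ

lemma L_zpow (n : ℤ) : L ^ n = ⟨!![1, 0; n, 1], by norm_num [Matrix.det_fin_two_of]⟩ := by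
  have hinv : L⁻¹ = (⟨!![1, 0; -1, 1], by norm_num [Matrix.det_fin_two_of]⟩ : SL2Z) := by
    apply inv_eq_of_mul_eq_one_right
    apply Subtype.ext
    erw [Matrix.SpecialLinearGroup.coe_mul]
    simp [L, Matrix.mul_fin_two, Matrix.one_fin_two]
  induction n using Int.induction_on with
  | zero => apply Subtype.ext; simp [Matrix.one_fin_two]
  | succ k ih =>
      rw [_root_.zpow_add_one, ih]
      apply Subtype.ext
      erw [Matrix.SpecialLinearGroup.coe_mul]
      simp [L, Matrix.mul_fin_two]
  | pred k ih =>
      rw [_root_.zpow_sub_one, ih, hinv]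
      apply Subtype.ext
      erw [Matrix.SpecialLinearGroup.coe_mul]
      simp [Matrix.mul_fin_two]
      ring

lemma R_zpow (n : ℤ) : R ^ n = ⟨!![1, n; 0, 1], by norm_num [Matrix.det_fin_two_of]⟩ := by
  have hinv : R⁻¹ = (⟨!![1, -1; 0, 1], by norm_num [Matrix.det_fin_two_of]⟩ : SL2Z) := by
    apply inv_eq_of_mul_eq_one_right
    apply Subtype.ext
    erw [Matrix.SpecialLinearGroup.coe_mul]
    simp [R, Matrix.mul_fin_two, Matrix.one_fin_two]
  induction n using Int.induction_on with
  | zero => apply Subtype.ext; simp [Matrix.one_fin_two]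
  | succ k ih =>
      rw [_root_.zpow_add_one, ih]
      apply Subtype.ext
      erw [Matrix.SpecialLinearGroup.coe_mul]
      simp [R, Matrix.mul_fin_two]
      ring_nf
  | pred k ih =>
      rw [_root_.zpow_sub_one, ih, hinv]
      apply Subtype.ext
      erw [Matrix.SpecialLinearGroup.coe_mul]
      simp [Matrix.mul_fin_two]
      ring

theorem stmt_5 (f : ℕ) (hf : 1 ≤ f) (m : ℕ) (hmodd : Odd m) (hm1 : 1 < m)
    (c : ℤ) (hc0 : c ≡ 0 [ZMOD ((2 : ℤ) ^ f)]) (hc1 : c ≡ 1 [ZMOD (m : ℤ)])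
    (a b : SL2Z) (ha : a = L ^ c) (hb : b = R ^ c) :
    (a * b⁻¹ * a) ^ 4 ∈ Gamma (2 ^ f * m) := by
  -- divisibility
  have hdvd2 : (2 : ℤ) ^ f ∣ c := Int.modEq_zero_iff_dvd.mp hc0
  have hdvdm : (m : ℤ) ∣ c - 1 := (Int.ModEq.dvd hc1.symm)
  have hcop : IsCoprime ((2:ℤ) ^ f) (m : ℤ) := by
    apply IsCoprime.pow_left
    rw [Int.isCoprime_iff_gcd_eq_one]
    simpa [Int.gcd] using hmodd
  have hN : ((2 ^ f * m : ℕ) : ℤ) ∣ c ^ 2 - c := by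
    push_cast
    have : c ^ 2 - c = c * (c - 1) := by ring
    rw [this]
    exact hcop.mul_dvd (hdvd2.mul_right _) (hdvdm.mul_left _)
  -- explicit matrix
  have hb' : b⁻¹ = (⟨!![1, -c; 0, 1], by norm_num [Matrix.det_fin_two_of]⟩ : SL2Z) := by
    rw [hb, ← _root_.zpow_neg, R_zpow]
  have hmat : ((a * b⁻¹ * a) ^ 4 : SL2Z) =
      (⟨!![1 - 16*c^2 + 40*c^4 - 32*c^6 + 8*c^8,
          -4*c + 20*c^3 - 24*c^5 + 8*c^7;
          8*c - 44*c^3 + 68*c^5 - 40*c^7 + 8*c^9,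
          1 - 16*c^2 + 40*c^4 - 32*c^6 + 8*c^8], by norm_num [Matrix.det_fin_two_of]; ring⟩ : SL2Z) := by
    rw [ha, hb', L_zpow]
    apply Subtype.ext
    simp only [pow_succ, pow_zero, one_mul]
    repeat erw [Matrix.SpecialLinearGroup.coe_mul]
    ext i j
    fin_cases i <;> fin_cases j <;>
      (simp [pow_succ, Matrix.mul_fin_two]; ring)
  rw [hmat]; refine Gamma_mem.mpr ?_
  have key : ∀ p d q : ℤ, p - d = (c ^ 2 - c) * q →
      ((p : ZMod (2 ^ f * m)) = ((d : ℤ) : ZMod (2 ^ f * m))) := by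
    intro p d q hq
    rw [ZMod.intCast_eq_intCast_iff]
    exact (Int.modEq_iff_dvd.mpr (dvd_sub_comm.mp (hN.trans ⟨q, hq⟩)))
  refine ⟨?_, ?_, ?_, ?_⟩
  · have h := key (1 - 16*c^2 + 40*c^4 - 32*c^6 + 8*c^8) 1
      (16*c + 16*c^2 - 24*c^3 - 24*c^4 + 8*c^5 + 8*c^6) (by ring)
    push_cast at h; simpa using h
  · have h := key (-4*c + 20*c^3 - 24*c^5 + 8*c^7) 0
      (4 + 4*c - 16*c^2 - 16*c^3 + 8*c^4 + 8*c^5) (by ring)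
    push_cast at h; simpa using h
  · have h := key (8*c - 44*c^3 + 68*c^5 - 40*c^7 + 8*c^9) 0
      (-8 - 8*c + 36*c^2 + 36*c^3 - 32*c^4 - 32*c^5 + 8*c^6 + 8*c^7) (by ring)
    push_cast at h; simpa using h
  · have h := key (1 - 16*c^2 + 40*c^4 - 32*c^6 + 8*c^8) 1
      (16*c + 16*c^2 - 24*c^3 - 24*c^4 + 8*c^5 + 8*c^6) (by ring)
    push_cast at h; simpa using h
end

section
/- Let N = e·m where e = 2^f with f ≥ 1 and m is an odd integer with m > 1. Let c be an integer with c ≡ 0 (mod e) and c ≡ 1 (mod m), and set a = L^c and b = R^c in SL(2,ℤ). Then the element (a·b⁻¹·a)²·((b⁻¹·a)³)⁻¹ lies in Γ(N). -/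
open Matrix CongruenceSubgroup

local notation "SL2Z" => Matrix.SpecialLinearGroup (Fin 2) ℤ

lemma coe_L_inv : ((L⁻¹ : SL2Z) : Matrix (Fin 2) (Fin 2) ℤ) = !![1, 0; -1, 1] := by
  rw [Matrix.SpecialLinearGroup.coe_inv]
  simp [L, Matrix.adjugate_fin_two]

lemma coe_R_inv : ((R⁻¹ : SL2Z) : Matrix (Fin 2) (Fin 2) ℤ) = !![1, -1; 0, 1] := by
  rw [Matrix.SpecialLinearGroup.coe_inv]
  simp [R, Matrix.adjugate_fin_two]

theorem stmt_6 (f : ℕ) (hf : 1 ≤ f) (m : ℕ) (hmodd : Odd m) (hm1 : 1 < m)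
    (c : ℤ) (hc0 : c ≡ 0 [ZMOD ((2 : ℤ) ^ f)]) (hc1 : c ≡ 1 [ZMOD (m : ℤ)])
    (a b : SL2Z) (ha : a = L ^ c) (hb : b = R ^ c) :
    (a * b⁻¹ * a) ^ 2 * ((b⁻¹ * a) ^ 3)⁻¹ ∈ Gamma (2 ^ f * m) := by
  have hcoe : (((a * b⁻¹ * a) ^ 2 * ((b⁻¹ * a) ^ 3)⁻¹ : SL2Z) : Matrix (Fin 2) (Fin 2) ℤ) =
      !![1 - c^2 + c^4, c - 2*c^3 + c^5; c - 2*c^3 + c^5, 1 + 2*c^2 - 3*c^4 + c^6] := by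
    have hainv : a⁻¹ = L ^ (-c) := by rw [ha, _root_.zpow_neg]
    have hbinv : b⁻¹ = R ^ (-c) := by rw [hb, _root_.zpow_neg]
    have e1 : (a * b⁻¹ * a) ^ 2 * ((b⁻¹ * a) ^ 3)⁻¹ =
        a * b⁻¹ * a * (a * b⁻¹ * a) * (a⁻¹ * b * (a⁻¹ * b * (a⁻¹ * b))) := by
      simp only [pow_succ, pow_zero, one_mul, _root_.mul_inv_rev]
      group
    rw [e1, hainv, hbinv, ha, hb]
    simp only [Matrix.SpecialLinearGroup.coe_mul, coe_L_zpow, coe_R_zpow, Matrix.mul_fin_two]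
    congrm !![?_, ?_; ?_, ?_] <;> ring
  -- divisibility facts
  have he : ((2 : ℤ) ^ f) ∣ c := by simpa using hc0.dvd
  have hmdvd : (m : ℤ) ∣ c - 1 := by simpa using hc1.symm.dvd
  have hN : ((2 ^ f * m : ℕ) : ℤ) ∣ c * (c - 1) := by
    push_cast
    exact mul_dvd_mul he hmdvd
  have key : ∀ (P δ : ℤ), (∃ Q : ℤ, P - δ = c * (c - 1) * Q) →
      ((P : ZMod (2 ^ f * m)) = ((δ : ℤ) : ZMod (2 ^ f * m))) := by
    rintro P δ ⟨Q, hQ⟩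
    rw [ZMod.intCast_eq_intCast_iff]
    have hd : ((2 ^ f * m : ℕ) : ℤ) ∣ P - δ := hQ ▸ hN.mul_right Q
    have hd' : ((2 ^ f * m : ℕ) : ℤ) ∣ δ - P := by
      rw [show δ - P = -(P - δ) by ring]; exact dvd_neg.mpr hd
    exact Int.modEq_iff_dvd.mpr hd'
  rw [Gamma_mem]
  refine ⟨?_, ?_, ?_, ?_⟩
  · show ((((a * b⁻¹ * a) ^ 2 * ((b⁻¹ * a) ^ 3)⁻¹ : SL2Z) : Matrix (Fin 2) (Fin 2) ℤ) 0 0 :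
      ZMod (2 ^ f * m)) = 1
    rw [hcoe]
    have hent := key (1 - c^2 + c^4) 1 ⟨c * (c + 1), by ring⟩
    simpa using hent
  · show ((((a * b⁻¹ * a) ^ 2 * ((b⁻¹ * a) ^ 3)⁻¹ : SL2Z) : Matrix (Fin 2) (Fin 2) ℤ) 0 1 :
      ZMod (2 ^ f * m)) = 0
    rw [hcoe]
    have hent := key (c - 2*c^3 + c^5) 0 ⟨(c + 1) * (c^2 - 1), by ring⟩
    simpa using hent
  · show ((((a * b⁻¹ * a) ^ 2 * ((b⁻¹ * a) ^ 3)⁻¹ : SL2Z) : Matrix (Fin 2) (Fin 2) ℤ) 1 0 :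
      ZMod (2 ^ f * m)) = 0
    rw [hcoe]
    have hent := key (c - 2*c^3 + c^5) 0 ⟨(c + 1) * (c^2 - 1), by ring⟩
    simpa using hent
  · show ((((a * b⁻¹ * a) ^ 2 * ((b⁻¹ * a) ^ 3)⁻¹ : SL2Z) : Matrix (Fin 2) (Fin 2) ℤ) 1 1 :
      ZMod (2 ^ f * m)) = 1
    rw [hcoe]
    have hent := key (1 + 2*c^2 - 3*c^4 + c^6) 1 ⟨c * (c + 1) * (c^2 - 2), by ring⟩
    simpa using hent
end
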